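/- Let f : ℝ³ → ℝ be continuously differentiable and let h : ℝ³ → ℝ be a semi-inversion of f with respect to its third argument, i.e. h(t,x,f(t,x,y)) = y for all t,x,y ∈ ℝ. Let g : ℝ³ → ℝ be continuous, let I be an open interval, and let x, y : I → ℝ be differentiable functions satisfying x'(t) = f(t, x(t), y(t)) and y'(t) = g(t, x(t), y(t)) for all t ∈ I. Then (i) y(t) = h(t, x(t), x'(t)) for all t ∈ I, and (ii) x is twice differentiable on I with x''(t) = f_t(t, x(t), h(t,x(t),x'(t))) + x'(t)·f_x(t, x(t), h(t,x(t),x'(t))) + g(t, x(t), h(t,x(t),x'(t)))·f_y(t, x(t), h(t,x(t),x'(t))) for all t ∈ I, where f_t, f_x, f_y denote the partial derivatives of f with respect to its first, second and third arguments. -/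

import Mathlib

/-- Folding a planar nonautonomous system: if `f` is semi-invertible in its third
argument with semi-inversion `h`, then along any flow `(x, y)` of the system
`ẋ = f(t,x,y)`, `ẏ = g(t,x,y)` on an open interval, one has
`y(t) = h(t, x(t), ẋ(t))` and `x` satisfies the folded second-order equation. -/
theorem folding_of_planar_system
    (f g h : ℝ → ℝ → ℝ → ℝ)
    (hf : ContDiff ℝ 1 (fun p : ℝ × ℝ × ℝ => f p.1 p.2.1 p.2.2))
    (hg : Continuous (fun p : ℝ × ℝ × ℝ => g p.1 p.2.1 p.2.2))
    (hsemi : ∀ t x y, h t x (f t x y) = y)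
    (a b : ℝ) (x y : ℝ → ℝ)
    (hx : ∀ t ∈ Set.Ioo a b, HasDerivAt x (f t (x t) (y t)) t)
    (hy : ∀ t ∈ Set.Ioo a b, HasDerivAt y (g t (x t) (y t)) t) :
    (∀ t ∈ Set.Ioo a b, y t = h t (x t) (deriv x t)) ∧
    (∀ t ∈ Set.Ioo a b,
      HasDerivAt (deriv x)
        (deriv (fun r => f r (x t) (h t (x t) (deriv x t))) t
          + deriv x t * deriv (fun r => f t r (h t (x t) (deriv x t))) (x t)
          + g t (x t) (h t (x t) (deriv x t))
              * deriv (fun r => f t (x t) r) (h t (x t) (deriv x t))) t) := by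
  have hxd : ∀ t ∈ Set.Ioo a b, deriv x t = f t (x t) (y t) := fun t ht => (hx t ht).deriv
  have hhy : ∀ t ∈ Set.Ioo a b, h t (x t) (deriv x t) = y t := by
    intro t ht; rw [hxd t ht, hsemi]
  refine ⟨fun t ht => (hhy t ht).symm, ?_⟩
  intro t ht
  rw [hhy t ht, hxd t ht]
  set F : ℝ × ℝ × ℝ → ℝ := fun p => f p.1 p.2.1 p.2.2 with hFdef
  set p : ℝ × ℝ × ℝ := (t, x t, y t) with hpdef
  have hD : HasFDerivAt F (fderiv ℝ F p) p :=
    (hf.differentiable one_ne_zero p).hasFDerivAt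
  set D := fderiv ℝ F p with hDdef
  -- partial derivatives
  have h1 : HasDerivAt (fun r => f r (x t) (y t)) (D (1, 0, 0)) t := by
    have hc : HasDerivAt (fun r : ℝ => (r, x t, y t)) ((1 : ℝ), (0 : ℝ), (0 : ℝ)) t :=
      HasDerivAt.prodMk (hasDerivAt_id t) (HasDerivAt.prodMk (hasDerivAt_const t _) (hasDerivAt_const t _))
    exact hD.comp_hasDerivAt t hc
  have h2 : HasDerivAt (fun r => f t r (y t)) (D (0, 1, 0)) (x t) := by
    have hc : HasDerivAt (fun r : ℝ => (t, r, y t)) ((0 : ℝ), (1 : ℝ), (0 : ℝ)) (x t) :=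
      HasDerivAt.prodMk (hasDerivAt_const _ _) (HasDerivAt.prodMk (hasDerivAt_id _) (hasDerivAt_const _ _))
    exact hD.comp_hasDerivAt (x t) hc
  have h3 : HasDerivAt (fun r => f t (x t) r) (D (0, 0, 1)) (y t) := by
    have hc : HasDerivAt (fun r : ℝ => (t, x t, r)) ((0 : ℝ), (0 : ℝ), (1 : ℝ)) (y t) :=
      HasDerivAt.prodMk (hasDerivAt_const _ _) (HasDerivAt.prodMk (hasDerivAt_const _ _) (hasDerivAt_id _))
    exact hD.comp_hasDerivAt (y t) hc
  rw [h1.deriv, h2.deriv, h3.deriv]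
  -- the full curve
  have hc : HasDerivAt (fun s : ℝ => (s, x s, y s))
      ((1 : ℝ), f t (x t) (y t), g t (x t) (y t)) t :=
    HasDerivAt.prodMk (hasDerivAt_id t) (HasDerivAt.prodMk (hx t ht) (hy t ht))
  have hcomp : HasDerivAt (fun s => f s (x s) (y s))
      (D (1, f t (x t) (y t), g t (x t) (y t))) t :=
    HasFDerivAt.comp_hasDerivAt (l := F) (l' := D) t hD hc
  have hlin : D (1, f t (x t) (y t), g t (x t) (y t))
      = D (1, 0, 0) + f t (x t) (y t) * D (0, 1, 0) + g t (x t) (y t) * D (0, 0, 1) := by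
    have : ((1 : ℝ), f t (x t) (y t), g t (x t) (y t))
        = ((1 : ℝ), (0:ℝ), (0:ℝ)) + f t (x t) (y t) • ((0:ℝ), (1:ℝ), (0:ℝ))
          + g t (x t) (y t) • ((0:ℝ), (0:ℝ), (1:ℝ)) := by
      simp [Prod.ext_iff]
    rw [this, map_add, map_add, map_smul, map_smul]
    simp [smul_eq_mul]
  have heq : deriv x =ᶠ[nhds t] fun s => f s (x s) (y s) := by
    filter_upwards [isOpen_Ioo.mem_nhds ht] with s hs using hxd s hs
  rw [← hlin]
  exact hcomp.congr_of_eventuallyEq heq
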